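/- Let K be an algebraically closed field and F = K(x). Let S be a finite-dimensional K-subspace of F of dimension n ≥ 2, let v be one of the valuations v_α (α ∈ K) or v_∞, and let S_1 ⊂ … ⊂ S_n be the natural filtration of S with respect to v, with combinatorial genii γ_i. Set δ := max over 1 ≤ i ≤ n−1 of (γ_{i+1} − γ_i), and suppose δ + 2 ≤ n. Then K(S) = K(S_{δ+2}). -/

import Mathlib

open Polynomial

noncomputable section

namespace FFF

variable {K : Type*} [Field K] [IsAlgClosed K]

/-- Valuation of a rational function at the finite place `x - α`
(order of vanishing at `x - α`). -/
def vA (α : K) (f : RatFunc K) : ℤ :=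
  (Polynomial.rootMultiplicity α f.num : ℤ) - (Polynomial.rootMultiplicity α f.denom : ℤ)

/-- Valuation of a rational function at the place at infinity:
`deg (denominator) - deg (numerator)`. -/
def vInf (f : RatFunc K) : ℤ := -f.intDegree

/-- The places of `K(x)`: `some α` is the finite place at `α ∈ K`, `none` is the
place at infinity; `plval p` is the associated valuation. -/
def plval (p : Option K) (f : RatFunc K) : ℤ :=
  Option.elim p (vInf f) (fun α => vA α f)

/-- The degree of a rational function, `deg f = -v∞(f)`. -/
def fdeg (f : RatFunc K) : ℤ := f.intDegree

/-- A divisor on `K(x)`: an integer for every place, zero for all but finitely many. -/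
abbrev Divisor (K : Type*) [Field K] := Option K →₀ ℤ

/-- The degree of a divisor: the sum of its values. -/
def divDeg (D : Divisor K) : ℤ := D.sum fun _ n => n

/-- The Riemann–Roch space `L(D)` of a divisor `D`. -/
def RRset (D : Divisor K) : Set (RatFunc K) :=
  {f | f = 0 ∨ ∀ p : Option K, -(D p) ≤ plval p f}

/-- The subfield `K(T)` of `K(x)` generated by the constants `K` and a set `T`. -/
def Kgen (T : Set (RatFunc K)) : Subfield (RatFunc K) :=
  Subfield.closure ((Set.range fun a : K => (RatFunc.C a : RatFunc K)) ∪ T)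

/-- The combinatorial genus `γ = dim S² - 2 dim S + 1` of a subspace `S`. -/
def cgenus (S : Submodule K (RatFunc K)) : ℤ :=
  (Module.finrank K ↥(S * S) : ℤ) - 2 * (Module.finrank K ↥S : ℤ) + 1

/-- `sfil e i` is the `i`-th step (1-indexed) of the natural filtration attached to a
filtered basis `e`: the span of the first `i` basis vectors. -/
def sfil {n : ℕ} (e : Fin n → RatFunc K) (i : ℕ) : Submodule K (RatFunc K) :=
  Submodule.span K (e '' {j | (j : ℕ) < i})

/-- `e` is a filtered basis of `S` with respect to the valuation `v`:
a basis of `S` with strictly decreasing valuations. -/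
def IsFilteredBasis {n : ℕ} (v : RatFunc K → ℤ) (S : Submodule K (RatFunc K))
    (e : Fin n → RatFunc K) : Prop :=
  LinearIndependent K e ∧ Submodule.span K (Set.range e) = S ∧
    StrictAnti fun i => v (e i)

/-- `D` is the divisor of least degree with `S ⊆ L(D)`, i.e.
`D(P) = -min {v_P s : s ∈ S, s ≠ 0}` for every place `P`. -/
def IsMinDivisor (S : Submodule K (RatFunc K)) (D : Divisor K) : Prop :=
  ∀ p : Option K, IsLeast {d : ℤ | ∃ s ∈ S, s ≠ 0 ∧ plval p s = d} (-(D p))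


set_option linter.unusedSectionVars false








lemma vA_spec (α : K) {f : RatFunc K} {a b : Polynomial K} (ha : a ≠ 0) (hb : b ≠ 0)
    (h : f = algebraMap (Polynomial K) (RatFunc K) a / algebraMap (Polynomial K) (RatFunc K) b) :
    vA α f = (rootMultiplicity α a : ℤ) - (rootMultiplicity α b : ℤ) := by
  have hf : f ≠ 0 := by
    rw [h]
    exact div_ne_zero (RatFunc.algebraMap_ne_zero ha) (RatFunc.algebraMap_ne_zero hb)
  have hnum : f.num ≠ 0 := RatFunc.num_ne_zero hf
  have hden : f.denom ≠ 0 := f.denom_ne_zero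
  have key : f.num * b = a * f.denom := by
    apply RatFunc.algebraMap_injective K
    rw [map_mul, map_mul]
    rw [← div_eq_div_iff (RatFunc.algebraMap_ne_zero hden) (RatFunc.algebraMap_ne_zero hb)]
    rw [RatFunc.num_div_denom, h]
  have h1 : rootMultiplicity α (f.num * b) = rootMultiplicity α f.num + rootMultiplicity α b :=
    rootMultiplicity_mul (mul_ne_zero hnum hb)
  have h2 : rootMultiplicity α (a * f.denom) = rootMultiplicity α a + rootMultiplicity α f.denom :=
    rootMultiplicity_mul (mul_ne_zero ha hden)
  have := key ▸ h1
  rw [h2] at this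
  unfold vA
  omega

lemma vA_mul (α : K) {f g : RatFunc K} (hf : f ≠ 0) (hg : g ≠ 0) :
    vA α (f * g) = vA α f + vA α g := by
  have h : f * g = algebraMap (Polynomial K) (RatFunc K) (f.num * g.num) /
      algebraMap (Polynomial K) (RatFunc K) (f.denom * g.denom) := by
    rw [map_mul, map_mul, ← div_mul_div_comm, RatFunc.num_div_denom, RatFunc.num_div_denom]
  rw [vA_spec α (mul_ne_zero (RatFunc.num_ne_zero hf) (RatFunc.num_ne_zero hg))
    (mul_ne_zero f.denom_ne_zero g.denom_ne_zero) h,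
    rootMultiplicity_mul (mul_ne_zero (RatFunc.num_ne_zero hf) (RatFunc.num_ne_zero hg)),
    rootMultiplicity_mul (mul_ne_zero f.denom_ne_zero g.denom_ne_zero)]
  unfold vA
  push_cast
  ring

lemma vA_add (α : K) {f g : RatFunc K} (hf : f ≠ 0) (hg : g ≠ 0) (hfg : f + g ≠ 0) :
    min (vA α f) (vA α g) ≤ vA α (f + g) := by
  have hdf := f.denom_ne_zero
  have hdg := g.denom_ne_zero
  have h : f + g = algebraMap (Polynomial K) (RatFunc K) (f.num * g.denom + f.denom * g.num) /
      algebraMap (Polynomial K) (RatFunc K) (f.denom * g.denom) := by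
    conv_lhs => rw [← RatFunc.num_div_denom f, ← RatFunc.num_div_denom g]
    rw [div_add_div _ _ (RatFunc.algebraMap_ne_zero hdf) (RatFunc.algebraMap_ne_zero hdg),
      map_add, map_mul, map_mul, map_mul]
  have ha : f.num * g.denom + f.denom * g.num ≠ 0 := by
    intro h0
    rw [h0, map_zero, zero_div] at h
    exact hfg h
  rw [vA_spec α ha (mul_ne_zero hdf hdg) h,
    rootMultiplicity_mul (mul_ne_zero hdf hdg)]
  have hmin := rootMultiplicity_add (p := f.num * g.denom) (q := f.denom * g.num) α ha
  rw [rootMultiplicity_mul (mul_ne_zero (RatFunc.num_ne_zero hf) hdg),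
    rootMultiplicity_mul (mul_ne_zero hdf (RatFunc.num_ne_zero hg))] at hmin
  unfold vA
  omega

lemma plval_mul (p : Option K) {f g : RatFunc K} (hf : f ≠ 0) (hg : g ≠ 0) :
    plval p (f * g) = plval p f + plval p g := by
  cases p with
  | none =>
    have := RatFunc.intDegree_mul hf hg
    simp only [plval, Option.elim, vInf, this]
    ring
  | some α => exact vA_mul α hf hg

lemma min_le_plval_add (p : Option K) {f g : RatFunc K} (hf : f ≠ 0) (hg : g ≠ 0)
    (hfg : f + g ≠ 0) : min (plval p f) (plval p g) ≤ plval p (f + g) := by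
  cases p with
  | none =>
    have := RatFunc.intDegree_add_le hg hfg
    simp only [plval, Option.elim, vInf]
    omega
  | some α => exact vA_add α hf hg hfg

lemma plval_C (p : Option K) (c : K) : plval p (RatFunc.C c) = 0 := by
  cases p with
  | none =>
    simp only [plval, Option.elim, vInf, RatFunc.intDegree_C, neg_zero]
  | some α =>
    simp only [plval, Option.elim, vA, RatFunc.num_C, RatFunc.denom_C]
    rw [rootMultiplicity_C, show (1 : K[X]) = Polynomial.C 1 from (map_one _).symm,
      rootMultiplicity_C]
    simp

lemma RatFunc_C_ne_zero {c : K} (hc : c ≠ 0) : (RatFunc.C c : RatFunc K) ≠ 0 := by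
  intro h
  apply hc
  have := congrArg RatFunc.num h
  rwa [RatFunc.num_C, RatFunc.num_zero, Polynomial.C_eq_zero] at this

lemma plval_smul (p : Option K) {c : K} {x : RatFunc K} (hc : c ≠ 0) (hx : x ≠ 0) :
    plval p (c • x) = plval p x := by
  rw [RatFunc.smul_eq_C_mul, plval_mul p (RatFunc_C_ne_zero hc) hx, plval_C, zero_add]

lemma plval_bound_add (p : Option K) {c : ℤ} {x y : RatFunc K}
    (ihx : x = 0 ∨ c ≤ plval p x) (ihy : y = 0 ∨ c ≤ plval p y) :
    x + y = 0 ∨ c ≤ plval p (x + y) := by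
  rcases eq_or_ne x 0 with rfl | hx0
  · simpa using ihy
  rcases eq_or_ne y 0 with rfl | hy0
  · simpa using ihx
  rcases eq_or_ne (x + y) 0 with h | h
  · exact Or.inl h
  right
  have h1 := min_le_plval_add p hx0 hy0 h
  have cx := ihx.resolve_left hx0
  have cy := ihy.resolve_left hy0
  omega

lemma span_plval_bound (p : Option K) {c : ℤ} {T : Set (RatFunc K)}
    (hT : ∀ t ∈ T, t = 0 ∨ c ≤ plval p t) :
    ∀ x ∈ Submodule.span K T, x = 0 ∨ c ≤ plval p x := by
  intro x hx
  induction hx using Submodule.span_induction with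
  | mem t ht => exact hT t ht
  | zero => exact Or.inl rfl
  | add x y _ _ ihx ihy => exact plval_bound_add p ihx ihy
  | smul a x _ ih =>
    rcases eq_or_ne a 0 with rfl | ha
    · simp
    rcases eq_or_ne x 0 with rfl | hx0
    · simp
    right
    rw [plval_smul p ha hx0]
    exact ih.resolve_left hx0




lemma sfil_mono {n : ℕ} (e : Fin n → RatFunc K) {i j : ℕ} (h : i ≤ j) : sfil e i ≤ sfil e j :=
  Submodule.span_mono (Set.image_mono fun _ hx => lt_of_lt_of_le hx h)

lemma sfil_fd {n : ℕ} (e : Fin n → RatFunc K) (i : ℕ) : FiniteDimensional K (sfil e i) :=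
  FiniteDimensional.span_of_finite K ((Set.toFinite _).image e)

lemma sfil_finrank {n : ℕ} {e : Fin n → RatFunc K} (hli : LinearIndependent K e) {i : ℕ}
    (hi : i ≤ n) : Module.finrank K (sfil e i) = i := by
  have hset : e '' {j : Fin n | (j : ℕ) < i} =
      Set.range (fun k : Fin i => e (Fin.castLE hi k)) := by
    ext x
    constructor
    · rintro ⟨j, hj, rfl⟩; exact ⟨⟨(j : ℕ), hj⟩, rfl⟩
    · rintro ⟨k, rfl⟩; exact ⟨Fin.castLE hi k, k.isLt, rfl⟩
  have h := finrank_span_eq_card (R := K) (hli.comp (Fin.castLE hi) (Fin.castLE_injective hi))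
  rw [Fintype.card_fin] at h
  rw [sfil, hset]
  exact h

lemma span_subset_subfield {T : Set (RatFunc K)} {G : Subfield (RatFunc K)}
    (hC : ∀ c : K, RatFunc.C c ∈ G) (hT : T ⊆ ↑G) :
    (Submodule.span K T : Set (RatFunc K)) ⊆ ↑G := by
  intro x hx
  have hx' : x ∈ Submodule.span K T := hx
  clear hx
  induction hx' using Submodule.span_induction with
  | mem t ht => exact hT ht
  | zero => exact G.zero_mem
  | add x y _ _ ihx ihy => exact G.add_mem ihx ihy
  | smul a x _ ih => rw [RatFunc.smul_eq_C_mul]; exact G.mul_mem (hC a) ih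

lemma jump_ge {n : ℕ} (p : Option K) (e : Fin n → RatFunc K)
    (hli : LinearIndependent K e)
    (hanti : StrictAnti fun j => plval p (e j))
    {i : ℕ} (h1 : 1 ≤ i) (hi : i < n)
    (G : Subfield (RatFunc K)) (hSG : (sfil e i : Set (RatFunc K)) ⊆ ↑G)
    (heG : e ⟨i, hi⟩ ∉ G) :
    (i : ℤ) - 1 ≤ cgenus (sfil e (i + 1)) - cgenus (sfil e i) := by
  set u := e ⟨i, hi⟩ with hu
  have hu0 : u ≠ 0 := hli.ne_zero _
  set Si := sfil e i with hSi
  set A := Si * Si with hA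
  set B := Submodule.map (LinearMap.mulLeft K u) Si with hB
  set Cs := Submodule.span K {u * u} with hCs
  have hi1 : i - 1 < n := by omega
  set c := plval p (e ⟨i - 1, hi1⟩) with hc
  have hcu : plval p u < c := by
    apply hanti
    rw [Fin.mk_lt_mk]
    omega
  -- valuation bound on S_i
  have hSi_val : ∀ x ∈ Si, x = 0 ∨ c ≤ plval p x := by
    apply span_plval_bound
    rintro t ⟨j, hj, rfl⟩
    have hj' : (j : ℕ) < i := hj
    right
    exact hanti.antitone (show (⟨i - 1, hi1⟩ : Fin n) ≥ j by
      rw [ge_iff_le, Fin.le_def]; simp; omega)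
  -- elements of A lie in G
  have hA_G : ∀ x ∈ A, (x : RatFunc K) ∈ G := fun x hx =>
    Submodule.mul_induction_on hx (fun m hm r hr => G.mul_mem (hSG hm) (hSG hr))
      (fun x y hx hy => G.add_mem hx hy)
  -- valuation bound on A
  have hA_val : ∀ x ∈ A, x = 0 ∨ c + c ≤ plval p x := by
    intro x hx
    refine Submodule.mul_induction_on hx ?_ (fun x y ihx ihy => plval_bound_add p ihx ihy)
    intro m hm r hr
    rcases hSi_val m hm with rfl | hm'
    · simp
    rcases hSi_val r hr with rfl | hr'
    · simp
    rcases eq_or_ne m 0 with rfl | hm0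
    · simp
    rcases eq_or_ne r 0 with rfl | hr0
    · simp
    right
    rw [plval_mul p hm0 hr0]
    omega
  -- A ⊓ B = ⊥
  have hAB : A ⊓ B = ⊥ := by
    rw [Submodule.eq_bot_iff]
    rintro x ⟨hxA, hxB⟩
    obtain ⟨s, hs, rfl⟩ := hxB
    rw [LinearMap.mulLeft_apply]
    by_contra hx0
    have hs0 : s ≠ 0 := by rintro rfl; simp at hx0
    apply heG
    have h1 : u * s ∈ G := hA_G _ (by rwa [LinearMap.mulLeft_apply] at hxA)
    have h2 : s ∈ G := hSG hs
    have : u = (u * s) * s⁻¹ := by field_simp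
    rw [this]
    exact G.mul_mem h1 (G.inv_mem h2)
  -- valuation bound on A ⊔ B
  have hAB_val : ∀ x ∈ A ⊔ B, x = 0 ∨ plval p u + c ≤ plval p x := by
    have hspan : A ⊔ B = Submodule.span K ((A : Set (RatFunc K)) ∪ ↑B) := by
      rw [Submodule.span_union, Submodule.span_eq, Submodule.span_eq]
    rw [hspan]
    apply span_plval_bound
    rintro t (ht | ht)
    · rcases hA_val t ht with rfl | h'
      · exact Or.inl rfl
      · right; omega
    · obtain ⟨s, hs, rfl⟩ := ht
      rw [LinearMap.mulLeft_apply]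
      rcases hSi_val s hs with rfl | hs'
      · simp
      rcases eq_or_ne s 0 with rfl | hs0
      · simp
      right
      rw [plval_mul p hu0 hs0]
      omega
  -- (A ⊔ B) ⊓ Cs = ⊥
  have hABC : (A ⊔ B) ⊓ Cs = ⊥ := by
    rw [Submodule.eq_bot_iff]
    rintro x ⟨hxAB, hxC⟩
    obtain ⟨k, rfl⟩ := Submodule.mem_span_singleton.mp hxC
    by_contra h0
    have hk : k ≠ 0 := by rintro rfl; simp at h0
    have huu : u * u ≠ 0 := mul_ne_zero hu0 hu0
    have hval : plval p (k • (u * u)) = plval p u + plval p u := by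
      rw [plval_smul p hk huu, plval_mul p hu0 hu0]
    have := (hAB_val _ hxAB).resolve_left h0
    omega
  -- finite dimensionality
  haveI : FiniteDimensional K Si := sfil_fd e i
  haveI : FiniteDimensional K ↥(sfil e (i + 1)) := sfil_fd e (i + 1)
  haveI : FiniteDimensional K A :=
    Module.Finite.iff_fg.mpr ((Module.Finite.iff_fg.mp inferInstance).mul
      (Module.Finite.iff_fg.mp inferInstance))
  haveI : FiniteDimensional K ↥(sfil e (i + 1) * sfil e (i + 1)) :=
    Module.Finite.iff_fg.mpr ((Module.Finite.iff_fg.mp inferInstance).mul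
      (Module.Finite.iff_fg.mp inferInstance))
  haveI : FiniteDimensional K B := inferInstance
  haveI : FiniteDimensional K Cs := FiniteDimensional.span_of_finite K (Set.finite_singleton _)
  -- dimensions
  have hfSi : Module.finrank K Si = i := sfil_finrank hli hi.le
  have hfB : Module.finrank K B = i := by
    rw [← hfSi]
    exact (Submodule.equivMapOfInjective _ (show Function.Injective (LinearMap.mulLeft K u) from mul_right_injective₀ hu0) Si).symm.finrank_eq
  have hfC : Module.finrank K Cs = 1 := finrank_span_singleton (mul_ne_zero hu0 hu0)
  have h12 : Module.finrank K ↥(A ⊔ B) = Module.finrank K A + i := by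
    have h := Submodule.finrank_sup_add_finrank_inf_eq A B
    rw [hAB, finrank_bot, hfB] at h
    omega
  have h123 : Module.finrank K ↥(A ⊔ B ⊔ Cs) = Module.finrank K A + i + 1 := by
    have h := Submodule.finrank_sup_add_finrank_inf_eq (A ⊔ B) Cs
    rw [hABC, finrank_bot, hfC, h12] at h
    omega
  -- inclusion into S_{i+1}²
  have hS1 : Si ≤ sfil e (i + 1) := sfil_mono e (Nat.le_succ i)
  have hu1 : u ∈ sfil e (i + 1) := Submodule.subset_span ⟨⟨i, hi⟩, by simp, rfl⟩
  have hle : A ⊔ B ⊔ Cs ≤ sfil e (i + 1) * sfil e (i + 1) := by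
    refine sup_le (sup_le ?_ ?_) ?_
    · exact mul_le_mul' hS1 hS1
    · rintro x ⟨s, hs, rfl⟩
      rw [LinearMap.mulLeft_apply]
      exact Submodule.mul_mem_mul hu1 (hS1 hs)
    · rw [hCs, Submodule.span_le, Set.singleton_subset_iff]
      exact Submodule.mul_mem_mul hu1 hu1
  have hrk : Module.finrank K A + i + 1 ≤
      Module.finrank K ↥(sfil e (i + 1) * sfil e (i + 1)) := by
    rw [← h123]
    exact Submodule.finrank_mono hle
  -- conclusion
  rw [hA, hSi] at hrk
  unfold cgenus
  rw [hSi]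
  rw [sfil_finrank hli hi.le, sfil_finrank hli (by omega : i + 1 ≤ n)]
  push_cast
  omega




lemma Kgen_C {T : Set (RatFunc K)} (c : K) : (RatFunc.C c : RatFunc K) ∈ Kgen T :=
  Subfield.subset_closure (Or.inl ⟨c, rfl⟩)

lemma Kgen_subset {T : Set (RatFunc K)} : T ⊆ ↑(Kgen T) :=
  fun _ hx => Subfield.subset_closure (Or.inr hx)



/-- If `δ` is the maximal jump of the combinatorial genii along the
natural filtration and `δ + 2 ≤ n`, then `K(S) = K(S_{δ+2})`. -/
theorem statement4 (n : ℕ) (hn : 2 ≤ n) (S : Submodule K (RatFunc K))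
    (hdim : Module.finrank K ↥S = n)
    (p : Option K) (e : Fin n → RatFunc K)
    (hbasis : IsFilteredBasis (plval p) S e)
    (δ : ℕ)
    (hδ : IsGreatest
      {d : ℤ | ∃ i : ℕ, 1 ≤ i ∧ i ≤ n - 1 ∧
        d = cgenus (sfil e (i + 1)) - cgenus (sfil e i)} (δ : ℤ))
    (hδn : δ + 2 ≤ n) :
    Kgen (S : Set (RatFunc K)) = Kgen ((sfil e (δ + 2) : Submodule K (RatFunc K)) : Set (RatFunc K)) := by
  obtain ⟨hli, hspan, hanti⟩ := hbasis
  set G := Kgen ((sfil e (δ + 2) : Submodule K (RatFunc K)) : Set (RatFunc K)) with hG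
  have hSn : sfil e n = S := by
    rw [sfil, show {j : Fin n | (j : ℕ) < n} = Set.univ from by
      ext j; simp [j.isLt], Set.image_univ, hspan]
  have main : ∀ k, δ + 2 + k ≤ n → (sfil e (δ + 2 + k) : Set (RatFunc K)) ⊆ ↑G := by
    intro k
    induction k with
    | zero => intro _; exact Kgen_subset
    | succ k ih =>
      intro hk
      have hik : δ + 2 + k < n := by omega
      have hsub := ih (by omega)
      have heG : e ⟨δ + 2 + k, hik⟩ ∈ G := by
        by_contra heG
        have hjump := jump_ge p e hli hanti (by omega : 1 ≤ δ + 2 + k) hik G hsub heG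
        have hmem : cgenus (sfil e (δ + 2 + k + 1)) - cgenus (sfil e (δ + 2 + k)) ≤ (δ : ℤ) :=
          hδ.2 ⟨δ + 2 + k, by omega, by omega, rfl⟩
        have := hjump.trans hmem
        push_cast at this
        omega
      show (sfil e (δ + 2 + k + 1) : Set (RatFunc K)) ⊆ ↑G
      apply span_subset_subfield (fun c => Kgen_C c)
      rintro t ⟨j, hj, rfl⟩
      have hj' : (j : ℕ) < δ + 2 + k + 1 := hj
      rcases eq_or_ne (j : ℕ) (δ + 2 + k) with hje | hje
      · have : j = ⟨δ + 2 + k, hik⟩ := Fin.ext hje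
        rw [this]
        exact heG
      · refine hsub (Submodule.subset_span ⟨j, ?_, rfl⟩)
        show (j : ℕ) < δ + 2 + k
        omega
  have hSG : (S : Set (RatFunc K)) ⊆ ↑G := by
    have h := main (n - (δ + 2)) (by omega)
    rwa [show δ + 2 + (n - (δ + 2)) = n from by omega, hSn] at h
  apply le_antisymm
  · rw [Kgen]
    apply Subfield.closure_le.mpr
    rintro x (⟨c, rfl⟩ | hx)
    · exact Kgen_C c
    · exact hSG hx
  · apply Subfield.closure_mono
    apply Set.union_subset_union_right
    intro x hx
    have hle : sfil e (δ + 2) ≤ S := by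
      rw [← hspan]
      exact Submodule.span_mono (by rintro y ⟨j, _, rfl⟩; exact ⟨j, rfl⟩)
    exact hle hx



end FFF
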